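/- (Theorem 4, asymptotic behavior.) Let w : [0,∞) → W be a solution of the combinatorial Yamabe flow with w(0) = 0. Then for every boundary index i, lim_{t→∞} B_i(w(t)) = 0; consequently for every face ijk ∈ F, lim_{t→∞} θ^i_jk(w(t)) = 0, and for every edge ij of T, lim_{t→∞} l_ij(w(t)) = +∞. Geometrically, each right-angled hexagon degenerates to an ideal triangle and the initial hyperbolic surface with geodesic boundary converges to a complete hyperbolic surface with cusps. -/

import Mathlib

open Real Filter Set

/-- Inverse hyperbolic cosine. -/
noncomputable def _root_.arcosh (x : ℝ) : ℝ := Real.log (x + Real.sqrt (x ^ 2 - 1))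

/-- The length of the side of a right-angled hyperbolic hexagon opposite the side of
length `x`, where the three pairwise non-adjacent sides have lengths `x, y, z`. -/
noncomputable def theta (x y z : ℝ) : ℝ :=
  _root_.arcosh ((Real.cosh x + Real.cosh y * Real.cosh z) / (Real.sinh y * Real.sinh z))

/-- Combinatorial data of an ideally triangulated compact surface with `n` boundary
components, together with a fixed hyperbolic metric `l⁰` assigning a positive length
to each edge.  Boundary components are indexed by `Fin n`; each face is a triple of
pairwise distinct boundary indices; every boundary index occurs in at least one face. -/
structure IdealTriangulatedSurface (n : ℕ) where
  /-- The set of faces (ideal triangles), each recorded by the triple of boundary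
  components it meets. -/
  F : Finset (Fin n × Fin n × Fin n)
  /-- The three boundary indices of a face are pairwise distinct. -/
  distinct : ∀ f ∈ F, f.1 ≠ f.2.1 ∧ f.2.1 ≠ f.2.2 ∧ f.2.2 ≠ f.1
  /-- Every boundary component meets some face. -/
  covers : ∀ i : Fin n, ∃ f ∈ F, i = f.1 ∨ i = f.2.1 ∨ i = f.2.2
  /-- The fixed hyperbolic metric: the length `l⁰_ij > 0` of the edge `ij`. -/
  l0 : Fin n → Fin n → ℝ
  l0_symm : ∀ i j, l0 i j = l0 j i
  l0_pos : ∀ i j, 0 < l0 i j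

namespace IdealTriangulatedSurface

variable {n : ℕ} (S : IdealTriangulatedSurface n)

/-- `i j` is an edge of the ideal triangulation: `i ≠ j` and some face contains
both boundary indices `i` and `j`. -/
def IsEdge (i j : Fin n) : Prop :=
  i ≠ j ∧ ∃ f ∈ S.F, (i = f.1 ∨ i = f.2.1 ∨ i = f.2.2) ∧ (j = f.1 ∨ j = f.2.1 ∨ j = f.2.2)

/-- The space `W` of combinatorial conformal factors: those `w : Fin n → ℝ` with
`w_i + w_j > −log cosh (l⁰_ij / 2)` for every edge `ij`, i.e. those for which every
deformed edge length `l_ij(w)` is defined and positive. -/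
def W : Set (Fin n → ℝ) :=
  {w | ∀ i j : Fin n, S.IsEdge i j →
    -Real.log (Real.cosh (S.l0 i j / 2)) < w i + w j}

/-- The deformed edge length `l_ij(w)`, defined by
`cosh (l_ij(w)/2) = e^{w_i + w_j} cosh (l⁰_ij/2)`. -/
noncomputable def len (w : Fin n → ℝ) (i j : Fin n) : ℝ :=
  2 * _root_.arcosh (Real.exp (w i + w j) * Real.cosh (S.l0 i j / 2))

/-- `θ^i_jk(w)`: the length of the boundary arc on boundary component `i` of the
right-angled hexagon realizing the face `ijk` in the metric determined by `w`. -/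
noncomputable def thetaF (w : Fin n → ℝ) (i j k : Fin n) : ℝ :=
  theta (S.len w j k) (S.len w k i) (S.len w i j)

/-- `B_i(w)`: the length of the boundary component `i`, the sum over all faces
containing `i` of the boundary arc `θ^i` of that face. -/
noncomputable def Blen (w : Fin n → ℝ) (i : Fin n) : ℝ :=
  ∑ f ∈ S.F,
    ((if i = f.1 then S.thetaF w f.1 f.2.1 f.2.2 else 0)
      + (if i = f.2.1 then S.thetaF w f.2.1 f.2.2 f.1 else 0)
      + (if i = f.2.2 then S.thetaF w f.2.2 f.1 f.2.1 else 0))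

end IdealTriangulatedSurface

/-! ### Auxiliary lemmas on `_root_.arcosh` -/

lemma one_le_inner {x : ℝ} (hx : 1 ≤ x) : 1 ≤ x + Real.sqrt (x ^ 2 - 1) :=
  le_add_of_le_of_nonneg hx (Real.sqrt_nonneg _)

lemma arcosh_nonneg {x : ℝ} (hx : 1 ≤ x) : 0 ≤ _root_.arcosh x :=
  Real.log_nonneg (one_le_inner hx)

lemma arcosh_one : _root_.arcosh 1 = 0 := by
  simp [_root_.arcosh]

lemma arcosh_pos {x : ℝ} (hx : 1 < x) : 0 < _root_.arcosh x := by
  apply Real.log_pos; linarith [Real.sqrt_nonneg (x ^ 2 - 1)]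

lemma arcosh_mono {x y : ℝ} (hx : 1 ≤ x) (hxy : x ≤ y) : _root_.arcosh x ≤ _root_.arcosh y := by
  apply Real.log_le_log (by linarith [one_le_inner hx])
  have := Real.sqrt_le_sqrt (show x ^ 2 - 1 ≤ y ^ 2 - 1 by nlinarith)
  linarith

lemma cosh_arcosh {x : ℝ} (hx : 1 ≤ x) : Real.cosh (_root_.arcosh x) = x := by
  have h1 : (1:ℝ) ≤ x + Real.sqrt (x ^ 2 - 1) := one_le_inner hx
  have h0 : (0:ℝ) < x + Real.sqrt (x ^ 2 - 1) := by linarith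
  have hs : Real.sqrt (x ^ 2 - 1) ^ 2 = x ^ 2 - 1 := Real.sq_sqrt (by nlinarith)
  rw [_root_.arcosh, Real.cosh_eq, Real.exp_log h0, Real.exp_neg, Real.exp_log h0]
  rw [inv_eq_one_div]
  field_simp
  nlinarith [hs]

lemma sinh_arcosh {x : ℝ} (hx : 1 ≤ x) : Real.sinh (_root_.arcosh x) = Real.sqrt (x ^ 2 - 1) := by
  have h1 : (1:ℝ) ≤ x + Real.sqrt (x ^ 2 - 1) := one_le_inner hx
  have h0 : (0:ℝ) < x + Real.sqrt (x ^ 2 - 1) := by linarith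
  have hs : Real.sqrt (x ^ 2 - 1) ^ 2 = x ^ 2 - 1 := Real.sq_sqrt (by nlinarith)
  rw [_root_.arcosh, Real.sinh_eq, Real.exp_log h0, Real.exp_neg, Real.exp_log h0]
  rw [inv_eq_one_div]
  field_simp
  nlinarith [hs]

lemma tendsto_arcosh_atTop : Tendsto _root_.arcosh atTop atTop := by
  apply tendsto_atTop_mono' _ _ Real.tendsto_log_atTop
  filter_upwards [eventually_ge_atTop (1:ℝ)] with x hx
  exact Real.log_le_log (by linarith) (le_add_of_nonneg_right (Real.sqrt_nonneg _))

lemma continuousAt_arcosh_one : ContinuousAt _root_.arcosh 1 := by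
  have h : ContinuousAt (fun x : ℝ => x + Real.sqrt (x ^ 2 - 1)) 1 := by
    fun_prop
  have hne : (1:ℝ) + Real.sqrt (1 ^ 2 - 1) ≠ 0 := by norm_num
  exact (Real.continuousAt_log (by simpa using hne)).comp h

/-! ### The quantity `Q` whose `_root_.arcosh` is a hexagon boundary arc -/

noncomputable def Qval (A B C : ℝ) : ℝ :=
  (2*A^2-1 + (2*B^2-1)*(2*C^2-1)) /
    ((2 * Real.sqrt (B^2-1) * B) * (2 * Real.sqrt (C^2-1) * C))

lemma theta_eq {A B C : ℝ} (hA : 1 ≤ A) (hB : 1 ≤ B) (hC : 1 ≤ C) :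
    theta (2 * _root_.arcosh A) (2 * _root_.arcosh B) (2 * _root_.arcosh C) = _root_.arcosh (Qval A B C) := by
  have hA2 : Real.sqrt (A^2-1) ^ 2 = A^2-1 := Real.sq_sqrt (by nlinarith)
  have hB2 : Real.sqrt (B^2-1) ^ 2 = B^2-1 := Real.sq_sqrt (by nlinarith)
  have hC2 : Real.sqrt (C^2-1) ^ 2 = C^2-1 := Real.sq_sqrt (by nlinarith)
  rw [theta, Qval, Real.cosh_two_mul, Real.cosh_two_mul, Real.cosh_two_mul,
    Real.sinh_two_mul, Real.sinh_two_mul, _root_.cosh_arcosh hA, _root_.cosh_arcosh hB, _root_.cosh_arcosh hC,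
    _root_.sinh_arcosh hA, _root_.sinh_arcosh hB, _root_.sinh_arcosh hC, hA2, hB2, hC2]
  congr 1
  ring

lemma Qval_lower {A B C : ℝ} (hA : 1 ≤ A) (hB : 1 < B) (hC : 1 < C) :
    1 + A^2 / (4*B^2*C^2) ≤ Qval A B C := by
  set sB := Real.sqrt (B^2-1) with hsBdef
  set sC := Real.sqrt (C^2-1) with hsCdef
  have hsB : sB^2 = B^2-1 := Real.sq_sqrt (by nlinarith)
  have hsC : sC^2 = C^2-1 := Real.sq_sqrt (by nlinarith)
  have hsB0 : 0 < sB := Real.sqrt_pos.2 (by nlinarith)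
  have hsC0 : 0 < sC := Real.sqrt_pos.2 (by nlinarith)
  have hB0 : (0:ℝ) < B := by linarith
  have hC0 : (0:ℝ) < C := by linarith
  have hD0 : 0 < (2 * sB * B) * (2 * sC * C) := by positivity
  rw [Qval, le_div_iff₀ hD0]
  have k1 : 2 * sB * B ≤ 2*B^2-1 := by nlinarith [sq_nonneg (B - sB)]
  have k2 : 2 * sC * C ≤ 2*C^2-1 := by nlinarith [sq_nonneg (C - sC)]
  have kB : sB ≤ B := by nlinarith
  have kC : sC ≤ C := by nlinarith
  have hDle : (2 * sB * B) * (2 * sC * C) ≤ 4*B^2*C^2 := by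
    calc (2 * sB * B) * (2 * sC * C) ≤ (2 * B * B) * (2 * C * C) := by
          apply mul_le_mul (by nlinarith) (by nlinarith) (by positivity) (by positivity)
      _ = 4*B^2*C^2 := by ring
  have hA2 : A^2 / (4*B^2*C^2) * ((2 * sB * B) * (2 * sC * C)) ≤ A^2 := by
    rw [div_mul_eq_mul_div, div_le_iff₀ (by positivity)]
    nlinarith [sq_nonneg A]
  have hprod : (2 * sB * B) * (2 * sC * C) ≤ (2*B^2-1)*(2*C^2-1) :=
    mul_le_mul k1 k2 (by positivity) (by nlinarith)
  have hexp : (1 + A^2/(4*B^2*C^2)) * ((2 * sB * B) * (2 * sC * C))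
      = ((2 * sB * B) * (2 * sC * C)) + A^2/(4*B^2*C^2) * ((2 * sB * B) * (2 * sC * C)) := by
    ring
  rw [hexp]
  nlinarith [hA2, hprod]

lemma Qval_upper {A B C : ℝ} (hA : 1 ≤ A) (hB : Real.sqrt 2 ≤ B) (hC : Real.sqrt 2 ≤ C) :
    Qval A B C ≤ A^2/(B^2*C^2) + (B / Real.sqrt (B^2-1)) * (C / Real.sqrt (C^2-1)) := by
  have h2 : (Real.sqrt 2)^2 = 2 := Real.sq_sqrt (by norm_num)
  have hs2 : (1:ℝ) < Real.sqrt 2 := by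
    nlinarith [Real.sqrt_nonneg 2]
  have hB1 : (1:ℝ) < B := lt_of_lt_of_le hs2 hB
  have hC1 : (1:ℝ) < C := lt_of_lt_of_le hs2 hC
  have hB2 : 2 ≤ B^2 := by nlinarith [Real.sqrt_nonneg 2]
  have hC2 : 2 ≤ C^2 := by nlinarith [Real.sqrt_nonneg 2]
  set sB := Real.sqrt (B^2-1) with hsBdef
  set sC := Real.sqrt (C^2-1) with hsCdef
  have hsB : sB^2 = B^2-1 := Real.sq_sqrt (by nlinarith)
  have hsC : sC^2 = C^2-1 := Real.sq_sqrt (by nlinarith)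
  have hsB0 : 0 < sB := Real.sqrt_pos.2 (by nlinarith)
  have hsC0 : 0 < sC := Real.sqrt_pos.2 (by nlinarith)
  have hB0 : (0:ℝ) < B := by linarith
  have hC0 : (0:ℝ) < C := by linarith
  have hD0 : 0 < (2 * sB * B) * (2 * sC * C) := by positivity
  have f1 : B ≤ Real.sqrt 2 * sB := by
    have h := Real.sqrt_le_sqrt (show B^2 ≤ 2*sB^2 by nlinarith)
    rwa [Real.sqrt_sq hB0.le,
      show (2:ℝ)*sB^2 = (Real.sqrt 2 * sB)^2 by rw [mul_pow, h2],
      Real.sqrt_sq (by positivity)] at h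
  have f2 : C ≤ Real.sqrt 2 * sC := by
    have h := Real.sqrt_le_sqrt (show C^2 ≤ 2*sC^2 by nlinarith)
    rwa [Real.sqrt_sq hC0.le,
      show (2:ℝ)*sC^2 = (Real.sqrt 2 * sC)^2 by rw [mul_pow, h2],
      Real.sqrt_sq (by positivity)] at h
  have f3 : B*C ≤ 2*(sB*sC) := by
    have h := mul_le_mul f1 f2 hC0.le (by positivity)
    have e : Real.sqrt 2 * sB * (Real.sqrt 2 * sC) = (Real.sqrt 2)^2 * (sB*sC) := by ring
    rw [e, h2] at h
    linarith
  have hDge : 2*B^2*C^2 ≤ (2 * sB * B) * (2 * sC * C) := by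
    nlinarith [mul_le_mul_of_nonneg_left f3 (mul_pos hB0 hC0).le]
  rw [Qval, add_div]
  have t1 : (2*A^2-1) / ((2 * sB * B) * (2 * sC * C)) ≤ A^2/(B^2*C^2) := by
    calc (2*A^2-1) / ((2 * sB * B) * (2 * sC * C)) ≤ (2*A^2) / (2*B^2*C^2) :=
          div_le_div₀ (by positivity) (by nlinarith) (by positivity) hDge
      _ = A^2/(B^2*C^2) := by ring
  have t2 : (2*B^2-1)*(2*C^2-1) / ((2 * sB * B) * (2 * sC * C)) ≤ (B/sB) * (C/sC) := by
    have heq : (B/sB) * (C/sC) = (4*B^2*C^2) / ((2 * sB * B) * (2 * sC * C)) := by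
      field_simp; ring
    rw [heq]
    exact div_le_div₀ (by positivity) (by nlinarith) hD0 le_rfl
  linarith

lemma tendsto_ratio : Tendsto (fun x : ℝ => x / Real.sqrt (x^2-1)) atTop (nhds 1) := by
  have h1 : Tendsto (fun x : ℝ => x^2 - 1) atTop atTop :=
    tendsto_atTop_add_const_right _ _ (tendsto_pow_atTop two_ne_zero)
  have h2 : Tendsto (fun y : ℝ => 1 + y⁻¹) atTop (nhds 1) := by
    have h : Tendsto (fun y : ℝ => (1:ℝ) + y⁻¹) atTop (nhds (1 + 0)) :=
      Tendsto.add tendsto_const_nhds tendsto_inv_atTop_zero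
    simpa using h
  have h3 : Tendsto (fun x : ℝ => 1 + (x^2-1)⁻¹) atTop (nhds 1) := h2.comp h1
  have h4 : Tendsto (fun x : ℝ => Real.sqrt (1 + (x^2-1)⁻¹)) atTop (nhds 1) := by
    have := (Real.continuous_sqrt.continuousAt (x := (1:ℝ))).tendsto.comp h3
    simpa [Function.comp_def] using this
  apply h4.congr'
  filter_upwards [eventually_ge_atTop (2:ℝ)] with x hx
  have hx0 : (0:ℝ) < x := by linarith
  have hx1 : (0:ℝ) < x^2 - 1 := by nlinarith
  have : 1 + (x^2-1)⁻¹ = x^2 / (x^2-1) := by field_simp; ring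
  rw [this, Real.sqrt_div (by positivity), Real.sqrt_sq hx0.le]

/-! ### Exponential estimates -/

lemma exp_ratio {wi wj wk M ca cb cc : ℝ} (hM : wi ≤ M) (hca : 1 ≤ ca)
    (hcb : 0 < cb) (hcc : 0 < cc) :
    Real.exp (-(4*M)) / (4*cb^2*cc^2) ≤
      (Real.exp (wj+wk) * ca)^2 / (4*(Real.exp (wk+wi) * cb)^2*(Real.exp (wi+wj) * cc)^2) := by
  have e : ∀ a : ℝ, Real.exp a ^ 2 = Real.exp (a+a) := fun a => by rw [sq, ← Real.exp_add]
  rw [div_le_div_iff₀ (by positivity) (by positivity)]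
  have key : Real.exp (-(4*M)) * (Real.exp (wk+wi)^2 * Real.exp (wi+wj)^2)
      ≤ Real.exp (wj+wk)^2 := by
    rw [e, e, e, ← Real.exp_add, ← Real.exp_add]
    exact Real.exp_le_exp.2 (by linarith)
  calc Real.exp (-(4*M)) * (4*(Real.exp (wk+wi) * cb)^2*(Real.exp (wi+wj) * cc)^2)
      = (Real.exp (-(4*M)) * (Real.exp (wk+wi)^2 * Real.exp (wi+wj)^2)) * (4*cb^2*cc^2) := by
        ring
    _ ≤ Real.exp (wj+wk)^2 * (4*cb^2*cc^2) :=
        mul_le_mul_of_nonneg_right key (by positivity)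
    _ ≤ (Real.exp (wj+wk) * ca)^2 * (4*cb^2*cc^2) := by
        have hca2 : 1 ≤ ca^2 := by nlinarith
        have h1 : Real.exp (wj+wk)^2 ≤ (Real.exp (wj+wk) * ca)^2 := by
          calc Real.exp (wj+wk)^2 = Real.exp (wj+wk)^2 * 1 := by ring
            _ ≤ Real.exp (wj+wk)^2 * ca^2 :=
                mul_le_mul_of_nonneg_left hca2 (sq_nonneg _)
            _ = (Real.exp (wj+wk) * ca)^2 := by ring
        exact mul_le_mul_of_nonneg_right h1 (by positivity)

lemma ratio_eq {wi wj wk ca cb cc : ℝ} (hcb : cb ≠ 0) (hcc : cc ≠ 0) :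
    (Real.exp (wj+wk) * ca)^2 / ((Real.exp (wk+wi) * cb)^2 * (Real.exp (wi+wj) * cc)^2)
      = Real.exp (-(4*wi)) * (ca^2/(cb^2*cc^2)) := by
  have hq : Real.exp (-(4*wi))
      = Real.exp ((wj+wk)+(wj+wk)) / Real.exp ((((wk+wi)+(wk+wi)) + ((wi+wj)+(wi+wj)))) := by
    rw [← Real.exp_sub]; congr 1; ring
  have hsplit : Real.exp ((((wk+wi)+(wk+wi)) + ((wi+wj)+(wi+wj))))
      = Real.exp ((wk+wi)+(wk+wi)) * Real.exp ((wi+wj)+(wi+wj)) := Real.exp_add _ _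
  have e : ∀ a : ℝ, Real.exp a ^ 2 = Real.exp (a+a) := fun a => by rw [sq, ← Real.exp_add]
  rw [hq, hsplit, mul_pow, mul_pow, mul_pow, e, e, e, div_mul_div_comm]
  congr 1
  ring

/-! ### Surface-level lemmas -/

namespace IdealTriangulatedSurface

variable {n : ℕ} (S : IdealTriangulatedSurface n)

/-- The deformed half-length parameter `E_ij(w) = e^{w_i+w_j} cosh(l⁰_ij/2)`. -/
noncomputable def Ef (v : Fin n → ℝ) (i j : Fin n) : ℝ :=
  Real.exp (v i + v j) * Real.cosh (S.l0 i j / 2)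

lemma Ef_gt_one {v : Fin n → ℝ} (hv : v ∈ S.W) {i j : Fin n} (hij : S.IsEdge i j) :
    1 < S.Ef v i j := by
  have hc : 0 < Real.cosh (S.l0 i j / 2) := Real.cosh_pos _
  have h := hv i j hij
  have h2 : (Real.cosh (S.l0 i j / 2))⁻¹ < Real.exp (v i + v j) := by
    calc (Real.cosh (S.l0 i j / 2))⁻¹
        = Real.exp (-Real.log (Real.cosh (S.l0 i j / 2))) := by
          rw [Real.exp_neg, Real.exp_log hc]
      _ < Real.exp (v i + v j) := Real.exp_lt_exp.2 h
  have h3 := mul_lt_mul_of_pos_right h2 hc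
  rwa [inv_mul_cancel₀ hc.ne'] at h3

lemma thetaF_eq {v : Fin n → ℝ} (hv : v ∈ S.W) {i j k : Fin n}
    (hij : S.IsEdge i j) (hjk : S.IsEdge j k) (hki : S.IsEdge k i) :
    S.thetaF v i j k = _root_.arcosh (Qval (S.Ef v j k) (S.Ef v k i) (S.Ef v i j)) :=
  theta_eq (S.Ef_gt_one hv hjk).le (S.Ef_gt_one hv hki).le (S.Ef_gt_one hv hij).le

lemma thetaF_nonneg {v : Fin n → ℝ} (hv : v ∈ S.W) {i j k : Fin n}
    (hij : S.IsEdge i j) (hjk : S.IsEdge j k) (hki : S.IsEdge k i) :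
    0 ≤ S.thetaF v i j k := by
  rw [S.thetaF_eq hv hij hjk hki]
  have hA := S.Ef_gt_one hv hjk
  have hB := S.Ef_gt_one hv hki
  have hC := S.Ef_gt_one hv hij
  apply _root_.arcosh_nonneg
  have h := Qval_lower hA.le hB hC
  have pos : 0 ≤ (S.Ef v j k)^2 / (4*(S.Ef v k i)^2*(S.Ef v i j)^2) := by positivity
  linarith

lemma face_edges {f : Fin n × Fin n × Fin n} (hf : f ∈ S.F) :
    S.IsEdge f.1 f.2.1 ∧ S.IsEdge f.2.1 f.2.2 ∧ S.IsEdge f.2.2 f.1 ∧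
      S.IsEdge f.2.1 f.1 ∧ S.IsEdge f.2.2 f.2.1 ∧ S.IsEdge f.1 f.2.2 := by
  obtain ⟨h1, h2, h3⟩ := S.distinct f hf
  exact ⟨⟨h1, f, hf, Or.inl rfl, Or.inr (Or.inl rfl)⟩,
    ⟨h2, f, hf, Or.inr (Or.inl rfl), Or.inr (Or.inr rfl)⟩,
    ⟨h3, f, hf, Or.inr (Or.inr rfl), Or.inl rfl⟩,
    ⟨h1.symm, f, hf, Or.inr (Or.inl rfl), Or.inl rfl⟩,
    ⟨h2.symm, f, hf, Or.inr (Or.inr rfl), Or.inr (Or.inl rfl)⟩,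
    ⟨h3.symm, f, hf, Or.inl rfl, Or.inr (Or.inr rfl)⟩⟩

lemma summand_nonneg {v : Fin n → ℝ} (hv : v ∈ S.W) {f : Fin n × Fin n × Fin n}
    (hf : f ∈ S.F) (i : Fin n) :
    0 ≤ (if i = f.1 then S.thetaF v f.1 f.2.1 f.2.2 else 0)
      + (if i = f.2.1 then S.thetaF v f.2.1 f.2.2 f.1 else 0)
      + (if i = f.2.2 then S.thetaF v f.2.2 f.1 f.2.1 else 0) := by
  obtain ⟨e1, e2, e3, _, _, _⟩ := S.face_edges hf
  have t1 : 0 ≤ S.thetaF v f.1 f.2.1 f.2.2 := S.thetaF_nonneg hv e1 e2 e3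
  have t2 : 0 ≤ S.thetaF v f.2.1 f.2.2 f.1 := S.thetaF_nonneg hv e2 e3 e1
  have t3 : 0 ≤ S.thetaF v f.2.2 f.1 f.2.1 := S.thetaF_nonneg hv e3 e1 e2
  have key : ∀ (c : Prop) [Decidable c] (x : ℝ), 0 ≤ x → 0 ≤ if c then x else 0 := by
    intro c _ x hx; split <;> simp [hx]
  exact add_nonneg (add_nonneg (key _ _ t1) (key _ _ t2)) (key _ _ t3)

lemma Blen_nonneg {v : Fin n → ℝ} (hv : v ∈ S.W) (i : Fin n) : 0 ≤ S.Blen v i :=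
  Finset.sum_nonneg fun f hf => S.summand_nonneg hv hf i

end IdealTriangulatedSurface

/-- Theorem 4, asymptotic behavior: along any solution
`w : [0,∞) → W` of the combinatorial Yamabe flow with `w(0) = 0`, every boundary
length `B_i(w(t))` tends to `0` as `t → ∞`; consequently every boundary arc
`θ^i_jk(w(t))` of every face tends to `0` and every edge length `l_ij(w(t))` tends
to `+∞` (each right-angled hexagon degenerates to an ideal triangle). -/
theorem stmt_17 {n : ℕ} (hn : 1 ≤ n) (S : IdealTriangulatedSurface n)
    (w : ℝ → (Fin n → ℝ)) (h0 : w 0 = 0)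
    (hmem : ∀ t ∈ Set.Ici (0 : ℝ), w t ∈ S.W)
    (hflow : ∀ t ∈ Set.Ici (0 : ℝ), ∀ i : Fin n,
      HasDerivWithinAt (fun s => w s i) (S.Blen (w t) i) (Set.Ici 0) t) :
    (∀ i : Fin n,
      Filter.Tendsto (fun t => S.Blen (w t) i) Filter.atTop (nhds 0)) ∧
    (∀ f ∈ S.F,
      Filter.Tendsto (fun t => S.thetaF (w t) f.1 f.2.1 f.2.2) Filter.atTop (nhds 0) ∧
      Filter.Tendsto (fun t => S.thetaF (w t) f.2.1 f.2.2 f.1) Filter.atTop (nhds 0) ∧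
      Filter.Tendsto (fun t => S.thetaF (w t) f.2.2 f.1 f.2.1) Filter.atTop (nhds 0)) ∧
    (∀ i j : Fin n, S.IsEdge i j →
      Filter.Tendsto (fun t => S.len (w t) i j) Filter.atTop Filter.atTop) := by
  -- continuity and monotonicity of each coordinate
  have hcont : ∀ i : Fin n, ContinuousOn (fun t => w t i) (Ici 0) :=
    fun i t ht => (hflow t ht i).continuousWithinAt
  have hmono : ∀ i : Fin n, MonotoneOn (fun t => w t i) (Ici 0) := by
    intro i
    apply monotoneOn_of_hasDerivWithinAt_nonneg (convex_Ici 0) (hcont i)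
      (f' := fun t => S.Blen (w t) i)
    · exact fun x hx => (hflow x (interior_subset hx) i).mono interior_subset
    · exact fun x hx => S.Blen_nonneg (hmem x (interior_subset hx)) i
  -- each coordinate tends to +∞
  have hw_top : ∀ i : Fin n, Tendsto (fun t => w t i) atTop atTop := by
    intro i
    by_cases hbdd : ∃ M : ℝ, ∀ t ∈ Ici (0:ℝ), w t i ≤ M
    · exfalso
      obtain ⟨M, hM⟩ := hbdd
      obtain ⟨f, hf, hi⟩ := S.covers i
      -- extract a face-based lower bound for `Blen`
      have hext : ∃ j k : Fin n, S.IsEdge i j ∧ S.IsEdge j k ∧ S.IsEdge k i ∧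
          ∀ v ∈ S.W, S.thetaF v i j k ≤ S.Blen v i := by
        obtain ⟨e1, e2, e3, _, _, _⟩ := S.face_edges hf
        obtain ⟨d1, d2, d3⟩ := S.distinct f hf
        have hBsum : ∀ v ∈ S.W, ∀ ii : Fin n,
            ((if ii = f.1 then S.thetaF v f.1 f.2.1 f.2.2 else 0)
              + (if ii = f.2.1 then S.thetaF v f.2.1 f.2.2 f.1 else 0)
              + (if ii = f.2.2 then S.thetaF v f.2.2 f.1 f.2.1 else 0)) ≤ S.Blen v ii := by
          intro v hv ii
          exact Finset.single_le_sum (fun g hg => S.summand_nonneg hv hg ii) hf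
        rcases hi with hi | hi | hi
        · refine ⟨f.2.1, f.2.2, hi ▸ e1, e2, hi ▸ e3, ?_⟩
          intro v hv
          refine le_trans ?_ (hBsum v hv i)
          rw [if_pos hi, if_neg (hi ▸ d1), if_neg (hi ▸ (Ne.symm d3))]
          rw [hi]; simp
        · refine ⟨f.2.2, f.1, hi ▸ e2, e3, hi ▸ e1, ?_⟩
          intro v hv
          refine le_trans ?_ (hBsum v hv i)
          rw [if_pos hi, if_neg (hi ▸ (Ne.symm d1)), if_neg (hi ▸ d2)]
          rw [hi]; simp
        · refine ⟨f.1, f.2.1, hi ▸ e3, e1, hi ▸ e2, ?_⟩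
          intro v hv
          refine le_trans ?_ (hBsum v hv i)
          rw [if_pos hi, if_neg (hi ▸ d3), if_neg (hi ▸ (Ne.symm d2))]
          rw [hi]; simp
      obtain ⟨j, k, hij, hjk, hki, hBge⟩ := hext
      set cb := Real.cosh (S.l0 k i / 2) with hcb
      set cc := Real.cosh (S.l0 i j / 2) with hcc
      set δ := Real.exp (-(4*M)) / (4*cb^2*cc^2) with hδ
      have hδ0 : 0 < δ := by
        have := Real.cosh_pos (S.l0 k i / 2)
        have := Real.cosh_pos (S.l0 i j / 2)
        positivity
      set ε := _root_.arcosh (1 + δ) with hε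
      have hε0 : 0 < ε := _root_.arcosh_pos (by linarith)
      -- the boundary length is bounded below by ε
      have hθlow : ∀ t ∈ Ici (0:ℝ), ε ≤ S.Blen (w t) i := by
        intro t ht
        have hv := hmem t ht
        have hA := S.Ef_gt_one hv hjk
        have hB := S.Ef_gt_one hv hki
        have hC := S.Ef_gt_one hv hij
        have h1 : δ ≤ (S.Ef (w t) j k)^2 / (4*(S.Ef (w t) k i)^2*(S.Ef (w t) i j)^2) :=
          exp_ratio (hM t ht) (Real.one_le_cosh _) (Real.cosh_pos _) (Real.cosh_pos _)
        have h2 := Qval_lower hA.le hB hC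
        calc ε ≤ _root_.arcosh (Qval (S.Ef (w t) j k) (S.Ef (w t) k i) (S.Ef (w t) i j)) :=
              _root_.arcosh_mono (by linarith) (by linarith)
          _ = S.thetaF (w t) i j k := (S.thetaF_eq hv hij hjk hki).symm
          _ ≤ S.Blen (w t) i := hBge (w t) hv
      -- comparison: w t i ≥ ε t
      have hd : ∀ t ∈ Ici (0:ℝ),
          HasDerivWithinAt (fun s => w s i - ε * s) (S.Blen (w t) i - ε) (Ici 0) t := by
        intro t ht
        have h1 := (hflow t ht i).sub (((hasDerivAt_id t).const_mul ε).hasDerivWithinAt)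
        simpa [Pi.sub_def] using h1
      have hg : MonotoneOn (fun t => w t i - ε * t) (Ici 0) := by
        apply monotoneOn_of_hasDerivWithinAt_nonneg (convex_Ici 0)
          (f' := fun t => S.Blen (w t) i - ε)
        · exact fun t ht => (hd t ht).continuousWithinAt
        · exact fun x hx => (hd x (interior_subset hx)).mono interior_subset
        · intro x hx
          have h := hθlow x (interior_subset hx)
          show 0 ≤ S.Blen (w x) i - ε
          linarith
      have hgrow : ∀ t ∈ Ici (0:ℝ), ε * t ≤ w t i := by
        intro t ht
        have h1 : w 0 i - ε * 0 ≤ w t i - ε * t := hg self_mem_Ici ht ht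
        rw [h0] at h1
        simp only [Pi.zero_apply, mul_zero, sub_zero, zero_sub] at h1
        linarith
      have hM0 : (0:ℝ) ≤ M := by
        have := hM 0 self_mem_Ici
        rw [h0] at this
        simpa using this
      have hT : (0:ℝ) ≤ (M+1)/ε := by positivity
      have h1 := hgrow ((M+1)/ε) hT
      have h2 := hM ((M+1)/ε) hT
      have heT : ε * ((M+1)/ε) = M + 1 := by field_simp
      rw [heT] at h1
      linarith
    · push_neg at hbdd
      rw [tendsto_atTop]
      intro b
      obtain ⟨t0, ht0, hb⟩ := hbdd b
      filter_upwards [eventually_ge_atTop t0, eventually_ge_atTop (0:ℝ)] with t ht1 ht2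
      exact le_trans hb.le (hmono i ht0 ht2 ht1)
  -- deformed parameters tend to +∞
  have hEtop : ∀ i j : Fin n, Tendsto (fun t => S.Ef (w t) i j) atTop atTop := by
    intro i j
    apply Tendsto.atTop_mul_const (Real.cosh_pos _)
    exact Real.tendsto_exp_atTop.comp (Filter.Tendsto.atTop_add_atTop (hw_top i) (hw_top j))
  -- edge lengths tend to +∞
  have hlen : ∀ i j : Fin n, S.IsEdge i j →
      Tendsto (fun t => S.len (w t) i j) atTop atTop := by
    intro i j _
    have h := (tendsto_arcosh_atTop.comp (hEtop i j)).const_mul_atTop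
      (show (0:ℝ) < 2 by norm_num)
    exact h
  -- each theta tends to 0
  have hθ0 : ∀ i j k : Fin n, S.IsEdge i j → S.IsEdge j k → S.IsEdge k i →
      Tendsto (fun t => S.thetaF (w t) i j k) atTop (nhds 0) := by
    intro i j k hij hjk hki
    have hQ : Tendsto
        (fun t => Qval (S.Ef (w t) j k) (S.Ef (w t) k i) (S.Ef (w t) i j)) atTop (nhds 1) := by
      apply tendsto_of_tendsto_of_tendsto_of_le_of_le' (g := fun _ : ℝ => (1:ℝ))
        (h := fun t => (S.Ef (w t) j k)^2/((S.Ef (w t) k i)^2*(S.Ef (w t) i j)^2)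
          + (S.Ef (w t) k i / Real.sqrt ((S.Ef (w t) k i)^2-1))
            * (S.Ef (w t) i j / Real.sqrt ((S.Ef (w t) i j)^2-1)))
      · exact tendsto_const_nhds
      · have hterm1 : Tendsto
            (fun t => (S.Ef (w t) j k)^2/((S.Ef (w t) k i)^2*(S.Ef (w t) i j)^2))
            atTop (nhds 0) := by
          have e : (fun t => (S.Ef (w t) j k)^2/((S.Ef (w t) k i)^2*(S.Ef (w t) i j)^2))
              = fun t => Real.exp (-(4 * w t i)) *
                (Real.cosh (S.l0 j k/2)^2/(Real.cosh (S.l0 k i/2)^2*Real.cosh (S.l0 i j/2)^2)) := by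
            funext t
            exact ratio_eq (Real.cosh_pos _).ne' (Real.cosh_pos _).ne'
          rw [e]
          have hexp : Tendsto (fun t => Real.exp (-(4 * w t i))) atTop (nhds 0) := by
            apply Real.tendsto_exp_atBot.comp
            exact tendsto_neg_atTop_atBot.comp ((hw_top i).const_mul_atTop (by norm_num))
          simpa using hexp.mul_const _
        have hterm2 : Tendsto
            (fun t => S.Ef (w t) k i / Real.sqrt ((S.Ef (w t) k i)^2-1)) atTop (nhds 1) :=
          tendsto_ratio.comp (hEtop k i)
        have hterm3 : Tendsto
            (fun t => S.Ef (w t) i j / Real.sqrt ((S.Ef (w t) i j)^2-1)) atTop (nhds 1) :=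
          tendsto_ratio.comp (hEtop i j)
        have := hterm1.add (hterm2.mul hterm3)
        simpa using this
      · filter_upwards [eventually_ge_atTop (0:ℝ)] with t ht
        have hv := hmem t ht
        have hA := S.Ef_gt_one hv hjk
        have hB := S.Ef_gt_one hv hki
        have hC := S.Ef_gt_one hv hij
        have h := Qval_lower hA.le hB hC
        have pos : 0 ≤ (S.Ef (w t) j k)^2 / (4*(S.Ef (w t) k i)^2*(S.Ef (w t) i j)^2) := by
          positivity
        linarith
      · filter_upwards [eventually_ge_atTop (0:ℝ),
          (hEtop k i).eventually_ge_atTop (Real.sqrt 2),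
          (hEtop i j).eventually_ge_atTop (Real.sqrt 2)] with t ht h1 h2
        exact Qval_upper (S.Ef_gt_one (hmem t ht) hjk).le h1 h2
    have harc : Tendsto
        (fun t => _root_.arcosh (Qval (S.Ef (w t) j k) (S.Ef (w t) k i) (S.Ef (w t) i j)))
        atTop (nhds 0) := by
      have := continuousAt_arcosh_one.tendsto.comp hQ
      simpa [_root_.arcosh_one, Function.comp_def] using this
    apply harc.congr'
    filter_upwards [eventually_ge_atTop (0:ℝ)] with t ht
    exact (S.thetaF_eq (hmem t ht) hij hjk hki).symm
  refine ⟨?_, ?_, hlen⟩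
  · -- boundary lengths tend to 0
    intro i
    have hsum : Tendsto (fun t => ∑ f ∈ S.F,
        ((if i = f.1 then S.thetaF (w t) f.1 f.2.1 f.2.2 else 0)
          + (if i = f.2.1 then S.thetaF (w t) f.2.1 f.2.2 f.1 else 0)
          + (if i = f.2.2 then S.thetaF (w t) f.2.2 f.1 f.2.1 else 0)))
        atTop (nhds (∑ _f ∈ S.F, (0:ℝ))) := by
      refine tendsto_finset_sum _ (fun f hf => ?_)
      obtain ⟨e1, e2, e3, _, _, _⟩ := S.face_edges hf
      have g1 : Tendsto (fun t => if i = f.1 then S.thetaF (w t) f.1 f.2.1 f.2.2 else 0)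
          atTop (nhds 0) := by
        by_cases h : i = f.1
        · simp only [if_pos h]; exact hθ0 f.1 f.2.1 f.2.2 e1 e2 e3
        · simp only [if_neg h]; exact tendsto_const_nhds
      have g2 : Tendsto (fun t => if i = f.2.1 then S.thetaF (w t) f.2.1 f.2.2 f.1 else 0)
          atTop (nhds 0) := by
        by_cases h : i = f.2.1
        · simp only [if_pos h]; exact hθ0 f.2.1 f.2.2 f.1 e2 e3 e1
        · simp only [if_neg h]; exact tendsto_const_nhds
      have g3 : Tendsto (fun t => if i = f.2.2 then S.thetaF (w t) f.2.2 f.1 f.2.1 else 0)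
          atTop (nhds 0) := by
        by_cases h : i = f.2.2
        · simp only [if_pos h]; exact hθ0 f.2.2 f.1 f.2.1 e3 e1 e2
        · simp only [if_neg h]; exact tendsto_const_nhds
      simpa using (g1.add g2).add g3
    simpa [IdealTriangulatedSurface.Blen] using hsum
  · -- all boundary arcs tend to 0
    intro f hf
    obtain ⟨e1, e2, e3, _, _, _⟩ := S.face_edges hf
    exact ⟨hθ0 f.1 f.2.1 f.2.2 e1 e2 e3, hθ0 f.2.1 f.2.2 f.1 e2 e3 e1,
      hθ0 f.2.2 f.1 f.2.1 e3 e1 e2⟩
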